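/- Suppose D and Z are {0,1}-valued random variables, the family of all potential variables (M_{d,z})_{d,z∈{0,1}} and (Y_{d,m})_{d,m∈{0,1}} is independent of the pair (D,Z), P(D=1, Z=z) > 0 for z = 0,1, the observed mediator is M = M_{D,Z} and the observed outcome is Y = Y_{D,M}. Then E[M | D=1, Z=1] − E[M | D=1, Z=0] = E[M_{1,1} − M_{1,0}] and E[Y | D=1, Z=1] − E[Y | D=1, Z=0] = E[Y_{1,M_{1,1}} − Y_{1,M_{1,0}}]; consequently, if E[M_{1,1} − M_{1,0}] ≠ 0, the Wald ratio (E[Y|D=1,Z=1] − E[Y|D=1,Z=0]) / (E[M|D=1,Z=1] − E[M|D=1,Z=0]) equals E[Y_{1,M_{1,1}} − Y_{1,M_{1,0}}] / E[M_{1,1} − M_{1,0}]. -/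

import Mathlib

open MeasureTheory ProbabilityTheory

/-- Conditional mean `E[W | A] = E[W·1_A] / P(A)` (set integral divided by probability). -/
noncomputable def condMean {Ω : Type*} [MeasurableSpace Ω] (P : Measure Ω)
    (W : Ω → ℝ) (A : Set Ω) : ℝ :=
  (∫ ω in A, W ω ∂P) / (P A).toReal

/-- A `{0,1}`-valued (Bool-coded) random variable, viewed as a real number. -/
noncomputable def bR (b : Bool) : ℝ := if b then 1 else 0

lemma condMean_eq_integral {Ω : Type*} (m1 m2 : MeasurableSpace Ω) [MeasurableSpace Ω]
    (P : Measure Ω) [IsProbabilityMeasure P] (hInd : Indep m1 m2 P)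
    {W : Ω → ℝ} (hWm : Measurable[m1] W) (hWint : Integrable W P)
    {A : Set Ω} (hAm : MeasurableSet[m2] A) (hAmeas : MeasurableSet A)
    (hA : 0 < (P A).toReal) :
    condMean P W A = ∫ ω, W ω ∂P := by
  have hindic : Measurable[m2] (A.indicator fun _ => (1 : ℝ)) :=
    measurable_const.indicator hAm
  have hind : IndepFun W (A.indicator (fun _ => (1 : ℝ))) P := by
    rw [IndepFun_iff_Indep]
    exact indep_of_indep_of_le_right (indep_of_indep_of_le_left hInd hWm.comap_le)
      hindic.comap_le
  have hintA : Integrable (A.indicator (fun _ => (1 : ℝ))) P :=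
    (integrable_const (1 : ℝ)).indicator hAmeas
  have hmul : ∀ ω, A.indicator W ω = W ω * A.indicator (fun _ => (1 : ℝ)) ω := by
    intro ω
    by_cases h : ω ∈ A <;> simp [h]
  have h1 : ∫ ω in A, W ω ∂P = (∫ ω, W ω ∂P) * (P A).toReal := by
    rw [← integral_indicator hAmeas]
    calc ∫ ω, A.indicator W ω ∂P
        = ∫ ω, W ω * A.indicator (fun _ => (1 : ℝ)) ω ∂P :=
          integral_congr_ae (Filter.Eventually.of_forall hmul)
      _ = (∫ ω, W ω ∂P) * ∫ ω, A.indicator (fun _ => (1 : ℝ)) ω ∂P :=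
          IndepFun.integral_fun_mul_eq_mul_integral hind hWint.1 hintA.1
      _ = (∫ ω, W ω ∂P) * (P A).toReal := by
          congr 1
          exact integral_indicator_one hAmeas
  unfold condMean
  rw [h1, mul_div_assoc, div_self hA.ne', mul_one]

theorem stmt_1 {Ω : Type*} [MeasurableSpace Ω] (P : Measure Ω) [IsProbabilityMeasure P]
    (D Z : Ω → Bool) (M : Bool → Bool → Ω → Bool) (Ypo : Bool → Bool → Ω → ℝ)
    (hD : Measurable D) (hZ : Measurable Z) (hM : ∀ d z, Measurable (M d z))
    (hYint : ∀ d m, Integrable (Ypo d m) P)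
    (hIndep : Indep
      ((⨆ (d : Bool) (z : Bool), MeasurableSpace.comap (M d z) inferInstance)
        ⊔ (⨆ (d : Bool) (m : Bool), MeasurableSpace.comap (Ypo d m) inferInstance))
      (MeasurableSpace.comap (fun ω => (D ω, Z ω)) inferInstance) P)
    (hpos : ∀ z : Bool, 0 < (P {ω | D ω = true ∧ Z ω = z}).toReal) :
    (condMean P (fun ω => bR (M (D ω) (Z ω) ω)) {ω | D ω = true ∧ Z ω = true}
        - condMean P (fun ω => bR (M (D ω) (Z ω) ω)) {ω | D ω = true ∧ Z ω = false}
      = ∫ ω, (bR (M true true ω) - bR (M true false ω)) ∂P)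
    ∧ (condMean P (fun ω => Ypo (D ω) (M (D ω) (Z ω) ω) ω) {ω | D ω = true ∧ Z ω = true}
        - condMean P (fun ω => Ypo (D ω) (M (D ω) (Z ω) ω) ω) {ω | D ω = true ∧ Z ω = false}
      = ∫ ω, (Ypo true (M true true ω) ω - Ypo true (M true false ω) ω) ∂P)
    ∧ ((∫ ω, (bR (M true true ω) - bR (M true false ω)) ∂P) ≠ 0 →
      (condMean P (fun ω => Ypo (D ω) (M (D ω) (Z ω) ω) ω) {ω | D ω = true ∧ Z ω = true}
          - condMean P (fun ω => Ypo (D ω) (M (D ω) (Z ω) ω) ω) {ω | D ω = true ∧ Z ω = false})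
        / (condMean P (fun ω => bR (M (D ω) (Z ω) ω)) {ω | D ω = true ∧ Z ω = true}
          - condMean P (fun ω => bR (M (D ω) (Z ω) ω)) {ω | D ω = true ∧ Z ω = false})
      = (∫ ω, (Ypo true (M true true ω) ω - Ypo true (M true false ω) ω) ∂P)
        / (∫ ω, (bR (M true true ω) - bR (M true false ω)) ∂P)) := by
  -- the conditioning events
  have hAmeas : ∀ z : Bool, MeasurableSet {ω | D ω = true ∧ Z ω = z} := fun z =>
    (hD (measurableSet_singleton true)).inter (hZ (measurableSet_singleton z))
  have hAm2 : ∀ z : Bool,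
      MeasurableSet[MeasurableSpace.comap (fun ω : Ω => (D ω, Z ω)) inferInstance]
        {ω | D ω = true ∧ Z ω = z} := by
    intro z
    refine ⟨{(true, z)}, measurableSet_singleton _, ?_⟩
    ext ω
    simp [Prod.ext_iff]
  -- measurability w.r.t. the potential-variables σ-algebra
  have hMm1 : ∀ d z, Measurable[(⨆ (d : Bool) (z : Bool),
      MeasurableSpace.comap (M d z) inferInstance)
        ⊔ (⨆ (d : Bool) (m : Bool), MeasurableSpace.comap (Ypo d m) inferInstance)] (M d z) := by
    intro d z
    refine Measurable.of_comap_le (le_trans ?_ le_sup_left)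
    exact le_trans (le_iSup (fun z' => MeasurableSpace.comap (M d z') inferInstance) z)
      (le_iSup (fun d' => ⨆ z', MeasurableSpace.comap (M d' z') inferInstance) d)
  have hYm1 : ∀ d m, Measurable[(⨆ (d : Bool) (z : Bool),
      MeasurableSpace.comap (M d z) inferInstance)
        ⊔ (⨆ (d : Bool) (m : Bool), MeasurableSpace.comap (Ypo d m) inferInstance)] (Ypo d m) := by
    intro d m
    refine Measurable.of_comap_le (le_trans ?_ le_sup_right)
    exact le_trans (le_iSup (fun m' => MeasurableSpace.comap (Ypo d m') inferInstance) m)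
      (le_iSup (fun d' => ⨆ m', MeasurableSpace.comap (Ypo d' m') inferInstance) d)
  have hbRm1 : ∀ z, Measurable[(⨆ (d : Bool) (z : Bool),
      MeasurableSpace.comap (M d z) inferInstance)
        ⊔ (⨆ (d : Bool) (m : Bool), MeasurableSpace.comap (Ypo d m) inferInstance)]
      (fun ω => bR (M true z ω)) :=
    fun z => (Measurable.of_discrete (f := bR)).comp (hMm1 true z)
  -- the Y-type counterfactual outcome, rewritten algebraically
  have hYrw : ∀ z, (fun ω => Ypo true (M true z ω) ω)
      = fun ω => Ypo true false ω + bR (M true z ω) * (Ypo true true ω - Ypo true false ω) := by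
    intro z
    funext ω
    cases h : M true z ω <;> simp [bR]
  have hYm1' : ∀ z, Measurable[(⨆ (d : Bool) (z : Bool),
      MeasurableSpace.comap (M d z) inferInstance)
        ⊔ (⨆ (d : Bool) (m : Bool), MeasurableSpace.comap (Ypo d m) inferInstance)]
      (fun ω => Ypo true (M true z ω) ω) := by
    intro z
    rw [hYrw z]
    exact (hYm1 true false).add ((hbRm1 z).mul ((hYm1 true true).sub (hYm1 true false)))
  -- integrability
  have hbRint : ∀ z, Integrable (fun ω => bR (M true z ω)) P := by
    intro z
    refine Integrable.mono' (integrable_const (1 : ℝ))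
      ((Measurable.of_discrete (f := bR)).comp (hM true z)).aestronglyMeasurable ?_
    refine Filter.Eventually.of_forall fun ω => ?_
    cases M true z ω <;> simp [bR]
  have hYint' : ∀ z, Integrable (fun ω => Ypo true (M true z ω) ω) P := by
    intro z
    rw [hYrw z]
    refine (hYint true false).add ?_
    refine Integrable.bdd_mul (c := 1) ((hYint true true).sub (hYint true false))
      ((Measurable.of_discrete (f := bR)).comp (hM true z)).aestronglyMeasurable (Filter.Eventually.of_forall fun ω => ?_)
    cases M true z ω <;> simp [bR]
  -- on the event {D = 1, Z = z}, observed = counterfactual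
  have hMcond : ∀ z : Bool, condMean P (fun ω => bR (M (D ω) (Z ω) ω)) {ω | D ω = true ∧ Z ω = z}
      = ∫ ω, bR (M true z ω) ∂P := by
    intro z
    have heq : condMean P (fun ω => bR (M (D ω) (Z ω) ω)) {ω | D ω = true ∧ Z ω = z}
        = condMean P (fun ω => bR (M true z ω)) {ω | D ω = true ∧ Z ω = z} := by
      unfold condMean
      congr 1
      refine setIntegral_congr_fun (hAmeas z) fun ω hω => ?_
      obtain ⟨h1, h2⟩ := hω
      rw [h1, h2]
    rw [heq]
    exact condMean_eq_integral _ _ P hIndep (hbRm1 z) (hbRint z) (hAm2 z) (hAmeas z) (hpos z)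
  have hYcond : ∀ z : Bool,
      condMean P (fun ω => Ypo (D ω) (M (D ω) (Z ω) ω) ω) {ω | D ω = true ∧ Z ω = z}
      = ∫ ω, Ypo true (M true z ω) ω ∂P := by
    intro z
    have heq : condMean P (fun ω => Ypo (D ω) (M (D ω) (Z ω) ω) ω) {ω | D ω = true ∧ Z ω = z}
        = condMean P (fun ω => Ypo true (M true z ω) ω) {ω | D ω = true ∧ Z ω = z} := by
      unfold condMean
      congr 1
      refine setIntegral_congr_fun (hAmeas z) fun ω hω => ?_
      obtain ⟨h1, h2⟩ := hω
      rw [h1, h2]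
    rw [heq]
    exact condMean_eq_integral _ _ P hIndep (hYm1' z) (hYint' z) (hAm2 z) (hAmeas z) (hpos z)
  have hMfinal : condMean P (fun ω => bR (M (D ω) (Z ω) ω)) {ω | D ω = true ∧ Z ω = true}
        - condMean P (fun ω => bR (M (D ω) (Z ω) ω)) {ω | D ω = true ∧ Z ω = false}
      = ∫ ω, (bR (M true true ω) - bR (M true false ω)) ∂P := by
    rw [hMcond true, hMcond false, ← integral_sub (hbRint true) (hbRint false)]
  have hYfinal : condMean P (fun ω => Ypo (D ω) (M (D ω) (Z ω) ω) ω) {ω | D ω = true ∧ Z ω = true}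
        - condMean P (fun ω => Ypo (D ω) (M (D ω) (Z ω) ω) ω) {ω | D ω = true ∧ Z ω = false}
      = ∫ ω, (Ypo true (M true true ω) ω - Ypo true (M true false ω) ω) ∂P := by
    rw [hYcond true, hYcond false, ← integral_sub (hYint' true) (hYint' false)]
  exact ⟨hMfinal, hYfinal, fun _ => by rw [hMfinal, hYfinal]⟩
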